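/- Let I be a nonempty finite index set, let P_i = (ν_i, λ_i) ∈ ℝ² for i ∈ I, let γ > 0, and suppose j, k ∈ I satisfy ν_j + γ λ_j = ν_k + γ λ_k ≤ ν_i + γ λ_i for every i ∈ I. Then the closed segment joining P_j and P_k is contained in the topological frontier of the convex hull of ⋃_{i ∈ I} (P_i + [0,∞)²). -/
import Mathlib


/-- If `νⱼ + γλⱼ = νₖ + γλₖ` is minimal among all `νᵢ + γλᵢ` (with `γ > 0`), then the
segment joining `Pⱼ` and `Pₖ` lies on the frontier of the convex hull of the union of
the translated first quadrants `Pᵢ + [0,∞)²`. -/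
theorem segment_subset_newton_polygon
    {I : Type*} [Fintype I] [Nonempty I] (P : I → ℝ × ℝ) (γ : ℝ) (hγ : 0 < γ)
    (j k : I)
    (heq : (P j).1 + γ * (P j).2 = (P k).1 + γ * (P k).2)
    (hmin : ∀ i, (P j).1 + γ * (P j).2 ≤ (P i).1 + γ * (P i).2) :
    segment ℝ (P j) (P k) ⊆
      frontier (convexHull ℝ (⋃ i, {q : ℝ × ℝ | (P i).1 ≤ q.1 ∧ (P i).2 ≤ q.2})) := by
  set S : Set (ℝ × ℝ) := ⋃ i, {q : ℝ × ℝ | (P i).1 ≤ q.1 ∧ (P i).2 ≤ q.2} with hS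
  set m : ℝ := (P j).1 + γ * (P j).2 with hm
  have hf : IsLinearMap ℝ (fun q : ℝ × ℝ => q.1 + γ * q.2) := by
    constructor
    · intro x y; simp; ring
    · intro c x; simp; ring
  -- S lies in the halfspace {q | m ≤ f q}
  have hSsub : S ⊆ {q : ℝ × ℝ | m ≤ q.1 + γ * q.2} := by
    rintro q hq
    simp only [hS, Set.mem_iUnion, Set.mem_setOf_eq] at hq
    obtain ⟨i, h1, h2⟩ := hq
    have : (P i).1 + γ * (P i).2 ≤ q.1 + γ * q.2 := by nlinarith
    exact le_trans (hmin i) this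
  have hhalf : Convex ℝ {q : ℝ × ℝ | m ≤ q.1 + γ * q.2} := convex_halfSpace_ge hf m
  have hullsub : convexHull ℝ S ⊆ {q : ℝ × ℝ | m ≤ q.1 + γ * q.2} :=
    convexHull_min hSsub hhalf
  -- P j, P k ∈ S
  have hPj : P j ∈ S := Set.mem_iUnion.2 ⟨j, le_refl _, le_refl _⟩
  have hPk : P k ∈ S := Set.mem_iUnion.2 ⟨k, le_refl _, le_refl _⟩
  have hseg : segment ℝ (P j) (P k) ⊆ convexHull ℝ S :=
    (convex_convexHull ℝ S).segment_subset (subset_convexHull ℝ S hPj)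
      (subset_convexHull ℝ S hPk)
  intro x hx
  have hxhull : x ∈ convexHull ℝ S := hseg hx
  -- f x = m
  have hfx : x.1 + γ * x.2 = m := by
    obtain ⟨a, b, ha, hb, hab, hxeq⟩ := hx
    have : x = a • P j + b • P k := hxeq.symm
    subst this
    simp only [Prod.fst_add, Prod.snd_add, Prod.smul_fst, Prod.smul_snd, smul_eq_mul]
    have h2 : (P k).1 + γ * (P k).2 = m := heq.symm
    linear_combination a * hm.symm + b * h2 + m * hab
  constructor
  · exact subset_closure hxhull
  · -- not in interior
    intro hxint
    rw [mem_interior_iff_mem_nhds, Metric.mem_nhds_iff] at hxint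
    obtain ⟨ε, hε, hball⟩ := hxint
    set y : ℝ × ℝ := (x.1 - ε / 2, x.2) with hy
    have hyball : y ∈ Metric.ball x ε := by
      simp only [Metric.mem_ball, hy, Prod.dist_eq, Real.dist_eq]
      have : |x.1 - ε / 2 - x.1| = ε / 2 := by
        rw [show x.1 - ε / 2 - x.1 = -(ε / 2) by ring, abs_neg, abs_of_pos (by linarith)]
      rw [this]
      simp only [sub_self, abs_zero]
      rw [max_eq_left (by linarith)]
      linarith
    have := hullsub (hball hyball)
    simp only [Set.mem_setOf_eq, hy] at this
    linarith
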